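/- Let p: ℕ → [0,1) with p(0) = 0 and p(k) ∈ (0, δ], δ < 1, for k ≥ 1, and f as defined by f(0)=1, f(k) = (1/(1−p(k)))·Π_{m=1}^{k}((1−p(m))/p(m)). Suppose z > 0 is within the radius of convergence of G(z) = Σ_{k≥0} f(k)z^k. Define η = (Σ_{k≥1} p(k)f(k)z^k)/G(z). Then η = z − z·η, i.e., η = z/(1+z) and z = η/(1−η). -/

import Mathlib

/-- Velocity–fugacity relation for the zero-range process: with the stationary
weights `f`, fugacity `z > 0` within the radius of convergence, and
`η = (Σ p(k)f(k)z^k)/(Σ f(k)z^k)`, one has `η = z - z·η`, i.e.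
`η = z/(1+z)` and `z = η/(1-η)`. -/
theorem zrp_velocity_fugacity (δ : ℝ) (hδ : δ < 1)
    (p : ℕ → ℝ) (hp0 : p 0 = 0) (hpk : ∀ k : ℕ, 1 ≤ k → 0 < p k ∧ p k ≤ δ)
    (f : ℕ → ℝ) (hf0 : f 0 = 1)
    (hfk : ∀ k : ℕ, 1 ≤ k →
      f k = (1 / (1 - p k)) * ∏ m ∈ Finset.Icc 1 k, ((1 - p m) / p m))
    (z : ℝ) (hz : 0 < z)
    (hsum : Summable (fun k : ℕ => f k * z ^ k))
    (hsum' : Summable (fun k : ℕ => p k * f k * z ^ k))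
    (η : ℝ) (hη : η = (∑' k : ℕ, p k * f k * z ^ k) / (∑' k : ℕ, f k * z ^ k)) :
    η = z - z * η ∧ η = z / (1 + z) ∧ z = η / (1 - η) := by
  -- basic facts about p
  have hpne : ∀ k : ℕ, 1 ≤ k → p k ≠ 0 := fun k hk => ne_of_gt (hpk k hk).1
  have hp1 : ∀ k : ℕ, 1 ≤ k → (1 : ℝ) - p k ≠ 0 := by
    intro k hk
    have := (hpk k hk).2
    have : p k < 1 := lt_of_le_of_lt this hδ
    linarith
  -- key recursion: p (k+1) * f (k+1) = (1 - p k) * f k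
  have hrec : ∀ k : ℕ, p (k + 1) * f (k + 1) = (1 - p k) * f k := by
    intro k
    rcases Nat.eq_zero_or_pos k with rfl | hk
    · have h1 := hpne 1 le_rfl
      have h2 := hp1 1 le_rfl
      rw [hfk 1 le_rfl, hf0, hp0]
      rw [Finset.Icc_self, Finset.prod_singleton]
      field_simp
      norm_num
    · rw [hfk (k + 1) (by omega), hfk k hk]
      rw [Finset.prod_Icc_succ_top (by omega : 1 ≤ k + 1)]
      have h1 := hpne (k + 1) (by omega)
      have h2 := hp1 (k + 1) (by omega)
      have h3 := hp1 k hk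
      have h4 : (0:ℝ) < ∏ m ∈ Finset.Icc 1 k, p m := by
        apply Finset.prod_pos
        intro m hm
        exact (hpk m (Finset.mem_Icc.mp hm).1).1
      field_simp
  -- positivity of f, hence of G
  have hfpos : ∀ k : ℕ, 0 < f k := by
    intro k
    rcases Nat.eq_zero_or_pos k with rfl | hk
    · rw [hf0]; norm_num
    · rw [hfk k hk]
      have h2 : 0 < 1 - p k := by
        have := (hpk k hk).2; have : p k < 1 := lt_of_le_of_lt this hδ; linarith
      apply mul_pos (by exact one_div_pos.mpr h2)
      apply Finset.prod_pos
      intro m hm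
      simp only [Finset.mem_Icc] at hm
      have hm1 := (hpk m hm.1).1
      have hm2 : p m < 1 := lt_of_le_of_lt (hpk m hm.1).2 hδ
      exact div_pos (by linarith) hm1
  set G := ∑' k : ℕ, f k * z ^ k with hG
  set N := ∑' k : ℕ, p k * f k * z ^ k with hN
  have hGpos : 0 < G := by
    have h0 : (0:ℝ) < f 0 * z ^ 0 := by rw [hf0]; norm_num
    calc (0:ℝ) < f 0 * z ^ 0 := h0
    _ ≤ G := Summable.le_tsum hsum 0 (fun i _ => le_of_lt (mul_pos (hfpos i) (pow_pos hz i)))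
  -- the telescoping identity: N = z * (G - N)
  have key : N = z * (G - N) := by
    have h1 : N = ∑' k : ℕ, p (k + 1) * f (k + 1) * z ^ (k + 1) := by
      rw [hN, Summable.tsum_eq_zero_add hsum']
      simp [hp0]
    have h2 : ∀ k : ℕ, p (k + 1) * f (k + 1) * z ^ (k + 1)
        = z * (f k * z ^ k - p k * f k * z ^ k) := by
      intro k
      rw [hrec k]
      ring
    have h3 : (∑' k : ℕ, p (k + 1) * f (k + 1) * z ^ (k + 1)) = z * (G - N) := by
      simp_rw [h2]
      rw [tsum_mul_left, Summable.tsum_sub hsum hsum']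
    exact h1.trans h3
  have hηG : η * G = N := by
    rw [hη, div_mul_cancel₀ _ (ne_of_gt hGpos)]
  have main : η = z - z * η := by
    have : η * G = (z - z * η) * G := by
      rw [hηG, key, ← hηG]; ring
    exact mul_right_cancel₀ (ne_of_gt hGpos) this
  refine ⟨main, ?_, ?_⟩
  · have h1z : (1 : ℝ) + z ≠ 0 := by linarith
    field_simp
    linarith [main]
  · have hη' : η = z / (1 + z) := by
      have h1z : (1 : ℝ) + z ≠ 0 := by linarith
      field_simp
      linarith [main]
    have h1η : 1 - η ≠ 0 := by
      rw [hη']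
      have h1z : (0 : ℝ) < 1 + z := by linarith
      have : z / (1 + z) < 1 := by rw [div_lt_one h1z]; linarith
      linarith
    rw [eq_div_iff h1η]
    linarith [main]
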